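/- Define the Hermite function for q with 2q not a non-positive integer by h_{-2q}(λ) = (1/(2Γ(2q))) ∑_{j=0}^∞ Γ(q + j/2) 2^{q+j/2} (-λ)^j / j!. Then for q > 0 and λ ≥ 0, h_{-2q}(λ) = (1/Γ(2q)) ∫_0^∞ t^{2q-1} e^{-t²/2 - λt} dt. -/

import Mathlib

open Real MeasureTheory

private lemma exp_tsum' (x : ℝ) : Real.exp x = ∑' j : ℕ, x ^ j / (Nat.factorial j) := by
  rw [Real.exp_eq_exp_ℝ, NormedSpace.exp_eq_tsum_div]

private lemma gauss_int (q : ℝ) (hq : 0 < q) (j : ℕ) :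
    ∫ t in Set.Ioi (0:ℝ), t ^ (2*q-1) * t ^ j * Real.exp (-t^2/2)
      = 2 ^ (q + (j:ℝ)/2) * Real.Gamma (q + (j:ℝ)/2) / 2 := by
  have h1 : ∀ t ∈ Set.Ioi (0:ℝ), t ^ (2*q-1) * t ^ j * Real.exp (-t^2/2)
      = t ^ (2*q-1+(j:ℝ)) * Real.exp (-(1/2:ℝ) * t ^ (2:ℝ)) := by
    intro t ht
    rw [Set.mem_Ioi] at ht
    have h2 : t ^ ((2:ℝ)) = t ^ (2:ℕ) := by
      rw [show ((2:ℝ)) = ((2:ℕ):ℝ) by norm_num, Real.rpow_natCast]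
    rw [Real.rpow_add ht, Real.rpow_natCast, h2]
    ring_nf
  rw [MeasureTheory.setIntegral_congr_fun measurableSet_Ioi h1,
    integral_rpow_mul_exp_neg_mul_rpow (by norm_num : (0:ℝ) < 2)
      (by nlinarith [Nat.cast_nonneg (α := ℝ) j] : (-1:ℝ) < 2*q-1+(j:ℝ))
      (by norm_num : (0:ℝ) < 1/2)]
  have e2 : -(2*q-1+(j:ℝ)+1)/2 = -(q + (j:ℝ)/2) := by ring
  have e1 : (2*q-1+(j:ℝ)+1)/2 = q + (j:ℝ)/2 := by ring
  rw [e2, e1, one_div, Real.inv_rpow (by norm_num), Real.rpow_neg (by norm_num), inv_inv]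
  ring

theorem hermite_function_series_eq_integral (q l : ℝ) (hq : 0 < q) (hl : 0 ≤ l) :
    (1 / (2 * Real.Gamma (2 * q))) *
        ∑' j : ℕ, Real.Gamma (q + j / 2) * (2 : ℝ) ^ (q + j / 2) * (-l) ^ j / (Nat.factorial j)
      = (1 / Real.Gamma (2 * q)) *
          ∫ t in Set.Ioi (0 : ℝ), t ^ (2 * q - 1) * Real.exp (-t ^ 2 / 2 - l * t) := by
  set f : ℕ → ℝ → ℝ :=
    fun j t => t ^ (2*q-1) * Real.exp (-t^2/2) * ((-(l*t)) ^ j / (Nat.factorial j)) with hf_def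
  -- measurability
  have meas_f : ∀ j : ℕ, AEStronglyMeasurable (f j) (volume.restrict (Set.Ioi 0)) := by
    intro j
    apply Measurable.aestronglyMeasurable
    fun_prop
  -- pointwise sum of the series
  have hsum : ∀ t : ℝ, ∑' j, f j t = t ^ (2*q-1) * Real.exp (-t^2/2 - l*t) := by
    intro t
    rw [hf_def]
    simp only
    rw [tsum_mul_left, ← exp_tsum' (-(l*t)),
      show -t^2/2 - l*t = (-t^2/2) + (-(l*t)) by ring, Real.exp_add, mul_assoc]
  -- norms
  have hnorm_eq : ∀ t : ℝ, 0 < t → ∀ j : ℕ,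
      ‖f j t‖ = t ^ (2*q-1) * Real.exp (-t^2/2) * ((l*t)^j / (Nat.factorial j)) := by
    intro t ht j
    have hc : (0:ℝ) ≤ t ^ (2*q-1) * Real.exp (-t^2/2) := by positivity
    rw [hf_def]
    simp only
    rw [Real.norm_eq_abs, abs_mul, abs_of_nonneg hc, abs_div, abs_pow, abs_neg,
      abs_of_nonneg (mul_nonneg hl ht.le), Nat.abs_cast]
  have hsummable : ∀ t : ℝ, Summable
      (fun j : ℕ => t ^ (2*q-1) * Real.exp (-t^2/2) * ((l*t)^j / (Nat.factorial j))) :=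
    fun t => (Real.summable_pow_div_factorial (l*t)).mul_left _
  -- the ennreal-summed norm
  have hnorm : ∀ t ∈ Set.Ioi (0:ℝ), (∑' j : ℕ, (‖f j t‖₊ : ENNReal)) =
      ENNReal.ofReal (t ^ (2*q-1) * Real.exp (-t^2/2) * Real.exp (l*t)) := by
    intro t ht
    rw [Set.mem_Ioi] at ht
    have h1 : (∑' j : ℕ, (‖f j t‖₊ : ENNReal)) = ∑' j : ℕ, ENNReal.ofReal ‖f j t‖ := by
      simp_rw [← enorm_eq_nnnorm, ← ofReal_norm]
    have hs2 : Summable (fun j : ℕ => ‖f j t‖) := by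
      apply Summable.congr (hsummable t)
      intro j; exact (hnorm_eq t ht j).symm
    rw [h1, ← ENNReal.ofReal_tsum_of_nonneg (fun j => norm_nonneg _) hs2]
    congr 1
    calc ∑' j : ℕ, ‖f j t‖
        = ∑' j : ℕ, t ^ (2*q-1) * Real.exp (-t^2/2) * ((l*t)^j / (Nat.factorial j)) :=
          tsum_congr (hnorm_eq t ht)
      _ = t ^ (2*q-1) * Real.exp (-t^2/2) * Real.exp (l*t) := by
          rw [tsum_mul_left, ← exp_tsum' (l*t)]
  -- integrable majorant
  have hint : IntegrableOn
      (fun t : ℝ => Real.exp (l^2) * (t ^ (2*q-1) * Real.exp (-(1/4:ℝ) * t^2)))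
      (Set.Ioi 0) :=
    (integrableOn_rpow_mul_exp_neg_mul_sq (by norm_num) (by linarith)).const_mul _
  have hbound : ∀ t ∈ Set.Ioi (0:ℝ),
      t ^ (2*q-1) * Real.exp (-t^2/2) * Real.exp (l*t)
        ≤ Real.exp (l^2) * (t ^ (2*q-1) * Real.exp (-(1/4:ℝ) * t^2)) := by
    intro t ht
    rw [Set.mem_Ioi] at ht
    have h1 : Real.exp (-t^2/2) * Real.exp (l*t) ≤ Real.exp (l^2) * Real.exp (-(1/4:ℝ) * t^2) := by
      rw [← Real.exp_add, ← Real.exp_add]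
      apply Real.exp_le_exp.2
      nlinarith [sq_nonneg (l - t/2)]
    have h2 : (0:ℝ) ≤ t ^ (2*q-1) := by positivity
    calc t ^ (2*q-1) * Real.exp (-t^2/2) * Real.exp (l*t)
        = t ^ (2*q-1) * (Real.exp (-t^2/2) * Real.exp (l*t)) := by ring
      _ ≤ t ^ (2*q-1) * (Real.exp (l^2) * Real.exp (-(1/4:ℝ) * t^2)) :=
          mul_le_mul_of_nonneg_left h1 h2
      _ = Real.exp (l^2) * (t ^ (2*q-1) * Real.exp (-(1/4:ℝ) * t^2)) := by ring
  -- the finiteness condition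
  have hf' : (∑' j : ℕ, ∫⁻ t in Set.Ioi (0:ℝ), ‖f j t‖₊) ≠ ⊤ := by
    rw [show (∑' j : ℕ, ∫⁻ t in Set.Ioi (0:ℝ), (‖f j t‖₊ : ENNReal)) = ∫⁻ t in Set.Ioi (0:ℝ), ∑' j : ℕ, (‖f j t‖₊ : ENNReal) from
      (MeasureTheory.lintegral_tsum (fun j => (meas_f j).enorm)).symm]
    have e1 : ∫⁻ t in Set.Ioi (0:ℝ), ∑' j : ℕ, (‖f j t‖₊ : ENNReal)
        = ∫⁻ t in Set.Ioi (0:ℝ),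
            ENNReal.ofReal (t ^ (2*q-1) * Real.exp (-t^2/2) * Real.exp (l*t)) :=
      setLIntegral_congr_fun measurableSet_Ioi hnorm
    rw [e1]
    have e2 : ∫⁻ t in Set.Ioi (0:ℝ),
          ENNReal.ofReal (t ^ (2*q-1) * Real.exp (-t^2/2) * Real.exp (l*t))
        ≤ ∫⁻ t in Set.Ioi (0:ℝ),
            ENNReal.ofReal (Real.exp (l^2) * (t ^ (2*q-1) * Real.exp (-(1/4:ℝ) * t^2))) := by
      apply MeasureTheory.lintegral_mono_ae
      filter_upwards [MeasureTheory.ae_restrict_mem measurableSet_Ioi] with t ht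
      exact ENNReal.ofReal_le_ofReal (hbound t ht)
    exact ne_top_of_le_ne_top (Integrable.lintegral_lt_top hint).ne e2
  -- interchange
  have key : (∫ t in Set.Ioi (0:ℝ), t ^ (2 * q - 1) * Real.exp (-t ^ 2 / 2 - l * t))
      = ∑' j : ℕ, ∫ t in Set.Ioi (0:ℝ), f j t := by
    rw [← MeasureTheory.integral_tsum meas_f hf']
    apply MeasureTheory.setIntegral_congr_fun measurableSet_Ioi
    intro t _
    exact (hsum t).symm
  -- compute each integral
  have each : ∀ j : ℕ, (∫ t in Set.Ioi (0:ℝ), f j t)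
      = (1/2) * (Real.Gamma (q + (j:ℝ)/2) * 2 ^ (q + (j:ℝ)/2) * (-l)^j / (Nat.factorial j)) := by
    intro j
    have e : ∀ t : ℝ, f j t
        = ((-l)^j / (Nat.factorial j)) * (t ^ (2*q-1) * t ^ j * Real.exp (-t^2/2)) := by
      intro t
      rw [hf_def]
      simp only
      rw [show -(l*t) = (-l)*t by ring, mul_pow]
      ring
    calc (∫ t in Set.Ioi (0:ℝ), f j t)
        = ∫ t in Set.Ioi (0:ℝ),
            ((-l)^j / (Nat.factorial j)) * (t ^ (2*q-1) * t ^ j * Real.exp (-t^2/2)) := by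
          apply MeasureTheory.setIntegral_congr_fun measurableSet_Ioi
          intro t _; exact e t
      _ = ((-l)^j / (Nat.factorial j)) *
            ∫ t in Set.Ioi (0:ℝ), t ^ (2*q-1) * t ^ j * Real.exp (-t^2/2) :=
          MeasureTheory.integral_const_mul _ _
      _ = ((-l)^j / (Nat.factorial j)) * (2 ^ (q + (j:ℝ)/2) * Real.Gamma (q + (j:ℝ)/2) / 2) := by
          rw [gauss_int q hq j]
      _ = (1/2) * (Real.Gamma (q + (j:ℝ)/2) * 2 ^ (q + (j:ℝ)/2) * (-l)^j / (Nat.factorial j)) := by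
          ring
  rw [key]
  rw [tsum_congr each, tsum_mul_left]
  ring
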